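/- Let φ: [0,T] → ℝ be continuous with T ≥ 1, and set M = ∫₀^T ∫₀^T exp(|φ(t) − φ(s)| / |t−s|^{1/4}) dt ds (assumed finite). Then there exist universal constants C₁, C₂ > 0 such that for all 0 < δ ≤ 1/2 and all s, t ∈ [0,T] with |s−t| ≤ δ, |φ(t) − φ(s)| ≤ (C₁ + C₂ log M) · δ^{1/4} · log(1/δ). -/

import Mathlib

open MeasureTheory Set Filter Topology

section GRR

variable {T : ℝ} {φ : ℝ → ℝ}

lemma grr_step (hφ : ContinuousOn φ (Set.Icc 0 T))
    (hf : IntegrableOn (fun p : ℝ × ℝ => Real.exp (|φ p.1 - φ p.2| / |p.1 - p.2| ^ ((1:ℝ)/4)))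
      (Set.Icc 0 T ×ˢ Set.Icc 0 T))
    {a b a' b' : ℝ} (h0a : 0 ≤ a) (haa : a ≤ a') (hab : a' < b') (hbb : b' ≤ b) (hbT : b ≤ T) :
    |(b - a)⁻¹ * (∫ x in a..b, φ x) - (b' - a')⁻¹ * ∫ x in a'..b', φ x| ≤
      (b - a) ^ ((1:ℝ)/4) *
        Real.log ((∫ p in Set.Icc 0 T ×ˢ Set.Icc 0 T,
          Real.exp (|φ p.1 - φ p.2| / |p.1 - p.2| ^ ((1:ℝ)/4))) / ((b - a) * (b' - a'))) := by
  set f : ℝ × ℝ → ℝ := fun p => Real.exp (|φ p.1 - φ p.2| / |p.1 - p.2| ^ ((1:ℝ)/4)) with hfdef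
  set g : ℝ × ℝ → ℝ := fun p => |φ p.1 - φ p.2| / |p.1 - p.2| ^ ((1:ℝ)/4) with hgdef
  have hab' : a < b := lt_of_le_of_lt haa (lt_of_lt_of_le hab hbb)
  set L : ℝ := b - a with hL
  set L' : ℝ := b' - a' with hL'
  have hLpos : 0 < L := sub_pos.mpr hab'
  have hL'pos : 0 < L' := sub_pos.mpr hab
  -- measures
  set μ : Measure ℝ := volume.restrict (Set.Ioc a' b') with hμ
  set ν : Measure ℝ := volume.restrict (Set.Ioc a b) with hν
  set π : Measure (ℝ × ℝ) := μ.prod ν with hπ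
  have hQsub : (Set.Ioc a' b' ×ˢ Set.Ioc a b) ⊆ Set.Icc 0 T ×ˢ Set.Icc 0 T := by
    intro p hp
    obtain ⟨h1, h2⟩ := hp
    constructor
    · exact ⟨le_trans h0a (le_trans haa (le_of_lt h1.1)), le_trans h1.2 (le_trans hbb hbT)⟩
    · exact ⟨le_trans h0a (le_of_lt h2.1), le_trans h2.2 hbT⟩
  have hπr : π = (volume : Measure (ℝ × ℝ)).restrict (Set.Ioc a' b' ×ˢ Set.Ioc a b) := by
    rw [hπ, hμ, hν, Measure.prod_restrict]
    rfl
  haveI : IsFiniteMeasure μ := by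
    constructor
    rw [hμ, Measure.restrict_apply_univ]
    exact measure_Ioc_lt_top
  haveI : IsFiniteMeasure ν := by
    constructor
    rw [hν, Measure.restrict_apply_univ]
    exact measure_Ioc_lt_top
  have hμuniv : μ Set.univ = ENNReal.ofReal L' := by
    rw [hμ, Measure.restrict_apply_univ, Real.volume_Ioc]
  have hνuniv : ν Set.univ = ENNReal.ofReal L := by
    rw [hν, Measure.restrict_apply_univ, Real.volume_Ioc]
  have hπuniv : π Set.univ = ENNReal.ofReal L' * ENNReal.ofReal L := by
    rw [hπ, ← Set.univ_prod_univ, Measure.prod_prod, hμuniv, hνuniv]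
  haveI : NeZero π := by
    refine ⟨Measure.measure_univ_ne_zero.mp ?_⟩
    rw [hπuniv]
    exact (ENNReal.mul_pos (ENNReal.ofReal_pos.mpr hL'pos).ne'
      (ENNReal.ofReal_pos.mpr hLpos).ne').ne'
  have hπtoReal : (π Set.univ).toReal = L' * L := by
    rw [hπuniv, ENNReal.toReal_mul, ENNReal.toReal_ofReal hL'pos.le, ENNReal.toReal_ofReal hLpos.le]
  -- integrability of f and g on Q
  have hfQ : Integrable f π := by
    rw [hπr]; exact hf.mono_set hQsub
  have hg0 : ∀ p, 0 ≤ g p := fun p =>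
    div_nonneg (abs_nonneg _) (Real.rpow_nonneg (abs_nonneg _) _)
  have hgf : ∀ p, g p = Real.log (f p) := fun p => (Real.log_exp _).symm
  have hgmeas : AEStronglyMeasurable g π := by
    have : AEStronglyMeasurable (fun p => Real.log (f p)) π :=
      (Real.measurable_log.comp_aemeasurable hfQ.aestronglyMeasurable.aemeasurable).aestronglyMeasurable
    refine this.congr (Eventually.of_forall fun p => (hgf p).symm)
  have hgQ : Integrable g π := by
    refine hfQ.mono hgmeas (Eventually.of_forall fun p => ?_)
    rw [Real.norm_eq_abs, Real.norm_eq_abs, abs_of_nonneg (hg0 p)]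
    have h1 : g p ≤ Real.exp (g p) := by linarith [Real.add_one_le_exp (g p)]
    exact le_trans h1 (le_abs_self _)
  -- integrability of φ ∘ snd and φ ∘ fst
  have hIccsub : Set.Icc a' b' ×ˢ Set.Icc a b ⊆ Set.Icc 0 T ×ˢ Set.Icc 0 T := by
    intro p hp
    exact ⟨⟨le_trans h0a (le_trans haa hp.1.1), le_trans hp.1.2 (le_trans hbb hbT)⟩,
      ⟨le_trans h0a hp.2.1, le_trans hp.2.2 hbT⟩⟩
  have hsnd : Integrable (fun p : ℝ × ℝ => φ p.2) π := by
    have hcs : ContinuousOn (fun p : ℝ × ℝ => φ p.2) (Set.Icc a' b' ×ˢ Set.Icc a b) :=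
      hφ.comp continuous_snd.continuousOn (fun p hp => (hIccsub hp).2)
    have h2 : IntegrableOn (fun p : ℝ × ℝ => φ p.2) (Set.Icc a' b' ×ˢ Set.Icc a b) volume :=
      hcs.integrableOn_compact (isCompact_Icc.prod isCompact_Icc)
    rw [hπr]
    exact h2.mono_set (Set.prod_mono Set.Ioc_subset_Icc_self Set.Ioc_subset_Icc_self)
  have hfst : Integrable (fun p : ℝ × ℝ => φ p.1) π := by
    have hcs : ContinuousOn (fun p : ℝ × ℝ => φ p.1) (Set.Icc a' b' ×ˢ Set.Icc a b) :=
      hφ.comp continuous_fst.continuousOn (fun p hp => (hIccsub hp).1)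
    have h2 : IntegrableOn (fun p : ℝ × ℝ => φ p.1) (Set.Icc a' b' ×ˢ Set.Icc a b) volume :=
      hcs.integrableOn_compact (isCompact_Icc.prod isCompact_Icc)
    rw [hπr]
    exact h2.mono_set (Set.prod_mono Set.Ioc_subset_Icc_self Set.Ioc_subset_Icc_self)
  have hsub_int : Integrable (fun p : ℝ × ℝ => φ p.2 - φ p.1) π := hsnd.sub hfst
  -- the integral identity
  have hid : ∫ p, (φ p.2 - φ p.1) ∂π
      = L' * (∫ x in a..b, φ x) - L * ∫ x in a'..b', φ x := by
    rw [integral_sub hsnd hfst, hπ, integral_fun_snd, integral_fun_fst, measureReal_def, measureReal_def, hμuniv, hνuniv,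
      intervalIntegral.integral_of_le hab'.le, intervalIntegral.integral_of_le hab.le,
      ENNReal.toReal_ofReal hL'pos.le, ENNReal.toReal_ofReal hLpos.le, smul_eq_mul, smul_eq_mul,
      hμ, hν]
  -- pointwise bound a.e.
  have hpt : ∀ᵐ p ∂π, |φ p.2 - φ p.1| ≤ L ^ ((1:ℝ)/4) * g p := by
    rw [hπr]
    refine (ae_restrict_iff' (measurableSet_Ioc.prod measurableSet_Ioc)).mpr
      (Eventually.of_forall fun p hp => ?_)
    rcases eq_or_ne p.1 p.2 with heq | hne
    · rw [heq, sub_self, abs_zero]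
      exact mul_nonneg (Real.rpow_nonneg hLpos.le _) (hg0 p)
    · have hd : 0 < |p.1 - p.2| := abs_pos.mpr (sub_ne_zero.mpr hne)
      have hdL : |p.1 - p.2| ≤ L := by
        have h1 : a < p.1 := lt_of_le_of_lt haa hp.1.1
        have h2 : p.1 ≤ b := le_trans hp.1.2 hbb
        have h3 : a < p.2 := hp.2.1
        have h4 : p.2 ≤ b := hp.2.2
        rw [abs_sub_le_iff]; constructor <;> linarith
      have hpow : |p.1 - p.2| ^ ((1:ℝ)/4) ≤ L ^ ((1:ℝ)/4) :=
        Real.rpow_le_rpow hd.le hdL (by norm_num)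
      have hval : |φ p.2 - φ p.1| = g p * |p.1 - p.2| ^ ((1:ℝ)/4) := by
        rw [hgdef]
        simp only []
        rw [div_mul_cancel₀ _ (ne_of_gt (Real.rpow_pos_of_pos hd _)), abs_sub_comm]
      rw [hval, mul_comm (L ^ ((1:ℝ)/4)) (g p)]
      exact mul_le_mul_of_nonneg_left hpow (hg0 p)
  -- Jensen
  have hexpg : Integrable (Real.exp ∘ g) π := by
    have : (Real.exp ∘ g) = f := by funext p; rfl
    rw [this]; exact hfQ
  have hJ : Real.exp (⨍ p, g p ∂π) ≤ ⨍ p, Real.exp (g p) ∂π :=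
    convexOn_exp.map_average_le Real.continuous_exp.continuousOn isClosed_univ
      (Eventually.of_forall fun _ => Set.mem_univ _) hgQ hexpg
  -- average of f is bounded by M₂ / (L * L')
  set M₂ : ℝ := ∫ p in Set.Icc 0 T ×ˢ Set.Icc 0 T, f p with hM₂
  have hfmono : ∫ p, f p ∂π ≤ M₂ := by
    rw [hπr]
    refine setIntegral_mono_set hf ?_ (HasSubset.Subset.eventuallyLE hQsub)
    exact Eventually.of_forall fun p => (Real.exp_pos _).le
  have havgf : ⨍ p, Real.exp (g p) ∂π ≤ (L' * L)⁻¹ * M₂ := by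
    have : (fun p => Real.exp (g p)) = f := by funext p; rfl
    rw [this, average_eq, measureReal_def, hπtoReal, smul_eq_mul]
    exact mul_le_mul_of_nonneg_left hfmono (by positivity)
  have havgfpos : 0 < (L' * L)⁻¹ * M₂ :=
    lt_of_lt_of_le (Real.exp_pos _) (le_trans hJ havgf)
  have hglog : ⨍ p, g p ∂π ≤ Real.log ((L' * L)⁻¹ * M₂) :=
    (Real.le_log_iff_exp_le havgfpos).mpr (le_trans hJ havgf)
  -- put it together
  have hΔ : L⁻¹ * (∫ x in a..b, φ x) - L'⁻¹ * (∫ x in a'..b', φ x)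
      = (L' * L)⁻¹ * ∫ p, (φ p.2 - φ p.1) ∂π := by
    have halg : ∀ X Y : ℝ, L⁻¹ * X - L'⁻¹ * Y = (L' * L)⁻¹ * (L' * X - L * Y) := by
      intro X Y
      field_simp
    rw [hid]
    exact halg _ _
  rw [hΔ, abs_mul, abs_of_nonneg (le_of_lt (by positivity : (0:ℝ) < (L' * L)⁻¹))]
  have step1 : |∫ p, (φ p.2 - φ p.1) ∂π| ≤ ∫ p, |φ p.2 - φ p.1| ∂π := by
    simpa [Real.norm_eq_abs] using
      norm_integral_le_integral_norm (μ := π) (fun p : ℝ × ℝ => φ p.2 - φ p.1)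
  have step2 : ∫ p, |φ p.2 - φ p.1| ∂π ≤ ∫ p, L ^ ((1:ℝ)/4) * g p ∂π :=
    integral_mono_ae hsub_int.abs (hgQ.const_mul _) hpt
  have step3 : ∫ p, L ^ ((1:ℝ)/4) * g p ∂π = L ^ ((1:ℝ)/4) * ∫ p, g p ∂π :=
    integral_const_mul _ _
  have step4 : (L' * L)⁻¹ * |∫ p, (φ p.2 - φ p.1) ∂π|
      ≤ L ^ ((1:ℝ)/4) * ((L' * L)⁻¹ * ∫ p, g p ∂π) := by
    calc (L' * L)⁻¹ * |∫ p, (φ p.2 - φ p.1) ∂π|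
        ≤ (L' * L)⁻¹ * (L ^ ((1:ℝ)/4) * ∫ p, g p ∂π) := by
          refine mul_le_mul_of_nonneg_left ?_ (by positivity)
          exact le_trans step1 (le_trans step2 (le_of_eq step3))
      _ = L ^ ((1:ℝ)/4) * ((L' * L)⁻¹ * ∫ p, g p ∂π) := by ring
  refine le_trans step4 ?_
  refine mul_le_mul_of_nonneg_left ?_ (Real.rpow_nonneg hLpos.le _)
  have havg : ⨍ p, g p ∂π = (L' * L)⁻¹ * ∫ p, g p ∂π := by
    rw [average_eq, measureReal_def, hπtoReal, smul_eq_mul]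
  rw [← havg]
  refine le_trans hglog ?_
  have : (L' * L)⁻¹ * M₂ = M₂ / (L * L') := by rw [mul_comm L' L]; field_simp
  rw [this]


lemma grr_M_ge_one (hT : 1 ≤ T)
    (hf : IntegrableOn (fun p : ℝ × ℝ => Real.exp (|φ p.1 - φ p.2| / |p.1 - p.2| ^ ((1:ℝ)/4)))
      (Set.Icc 0 T ×ˢ Set.Icc 0 T)) :
    1 ≤ ∫ p in Set.Icc 0 T ×ˢ Set.Icc 0 T,
        Real.exp (|φ p.1 - φ p.2| / |p.1 - p.2| ^ ((1:ℝ)/4)) := by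
  have h0T : (0:ℝ) ≤ T := le_trans zero_le_one hT
  have hmeas : MeasurableSet (Set.Icc (0:ℝ) T ×ˢ Set.Icc (0:ℝ) T) :=
    measurableSet_Icc.prod measurableSet_Icc
  have hvol : (volume : Measure (ℝ × ℝ)) (Set.Icc (0:ℝ) T ×ˢ Set.Icc (0:ℝ) T)
      = ENNReal.ofReal T * ENNReal.ofReal T := by
    rw [show (volume : Measure (ℝ × ℝ)) = (volume : Measure ℝ).prod (volume : Measure ℝ) from rfl,
      Measure.prod_prod, Real.volume_Icc, sub_zero]
  have hconst : IntegrableOn (fun _ : ℝ × ℝ => (1:ℝ)) (Set.Icc 0 T ×ˢ Set.Icc 0 T) volume := by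
    refine (integrableOn_const_iff).mpr (Or.inr ?_)
    rw [hvol]
    exact ENNReal.mul_lt_top ENNReal.ofReal_lt_top ENNReal.ofReal_lt_top
  have h1 : ∫ _ in Set.Icc (0:ℝ) T ×ˢ Set.Icc (0:ℝ) T, (1:ℝ)
      ≤ ∫ p in Set.Icc 0 T ×ˢ Set.Icc 0 T,
          Real.exp (|φ p.1 - φ p.2| / |p.1 - p.2| ^ ((1:ℝ)/4)) := by
    refine setIntegral_mono_on hconst hf hmeas fun p _ => ?_
    rw [show (1:ℝ) = Real.exp 0 from (Real.exp_zero).symm]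
    exact Real.exp_le_exp.mpr (div_nonneg (abs_nonneg _) (Real.rpow_nonneg (abs_nonneg _) _))
  refine le_trans ?_ h1
  rw [setIntegral_const, measureReal_def, hvol, smul_eq_mul, mul_one, ENNReal.toReal_mul,
    ENNReal.toReal_ofReal h0T]
  nlinarith

lemma grr_avg (hφ : ContinuousOn φ (Set.Icc 0 T)) {x r : ℝ} (hx : x ∈ Set.Icc 0 T) (hr : 0 < r)
    {a b : ℕ → ℝ} (hax : ∀ n, a n ≤ x) (hxb : ∀ n, x ≤ b n) (h0 : ∀ n, 0 ≤ a n)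
    (hbT : ∀ n, b n ≤ T) (hlen : ∀ n, b n - a n = r / 2 ^ n) :
    Tendsto (fun n => (b n - a n)⁻¹ * ∫ y in a n..b n, φ y) atTop (𝓝 (φ x)) := by
  rw [Metric.tendsto_atTop]
  intro ε hε
  have hc := hφ x hx
  rw [Metric.continuousWithinAt_iff] at hc
  obtain ⟨η, hη, hball⟩ := hc (ε/2) (by linarith)
  obtain ⟨N, hN⟩ : ∃ N : ℕ, r / 2 ^ N < η := by
    obtain ⟨N, hN0⟩ := exists_pow_lt_of_lt_one (div_pos hη hr) (by norm_num : (1:ℝ)/2 < 1)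
    refine ⟨N, ?_⟩
    have h2 : r / 2 ^ N = r * ((1:ℝ)/2) ^ N := by
      rw [div_pow, one_pow]; ring
    rw [h2]
    calc r * ((1:ℝ)/2) ^ N < r * (η / r) := mul_lt_mul_of_pos_left hN0 hr
      _ = η := by field_simp
  refine ⟨N, fun n hn => ?_⟩
  have h2pos : (0:ℝ) < 2 ^ n := by positivity
  have hablt : a n < b n := by
    have h := hlen n
    have : (0:ℝ) < r / 2 ^ n := div_pos hr h2pos
    linarith
  have hsubT : Set.Icc (a n) (b n) ⊆ Set.Icc 0 T := fun y hy =>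
    ⟨le_trans (h0 n) hy.1, le_trans hy.2 (hbT n)⟩
  have hInt : IntervalIntegrable φ volume (a n) (b n) := by
    refine ContinuousOn.intervalIntegrable ?_
    rw [Set.uIcc_of_le hablt.le]
    exact hφ.mono hsubT
  have hlensmall : b n - a n < η := by
    rw [hlen n]
    refine lt_of_le_of_lt ?_ hN
    exact div_le_div_of_nonneg_left hr.le (by positivity) (pow_le_pow_right₀ one_le_two hn)
  have hne : b n - a n ≠ 0 := ne_of_gt (by linarith)
  have hid : (b n - a n)⁻¹ * (∫ y in a n..b n, φ y) - φ x
      = (b n - a n)⁻¹ * ∫ y in a n..b n, (φ y - φ x) := by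
    rw [intervalIntegral.integral_sub hInt intervalIntegrable_const,
      intervalIntegral.integral_const, smul_eq_mul, mul_sub, ← mul_assoc,
      inv_mul_cancel₀ hne, one_mul]
  have hbd : |∫ y in a n..b n, (φ y - φ x)| ≤ ε/2 * |b n - a n| := by
    rw [← Real.norm_eq_abs (∫ y in a n..b n, (φ y - φ x))]
    refine intervalIntegral.norm_integral_le_of_norm_le_const fun y hy => ?_
    rw [Set.uIoc_of_le hablt.le] at hy
    have hyI : y ∈ Set.Icc 0 T := hsubT ⟨hy.1.le, hy.2⟩
    have hdist : dist y x < η := by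
      rw [Real.dist_eq]
      have h1 : |y - x| ≤ b n - a n := by
        rw [abs_sub_le_iff]
        constructor
        · linarith [hy.2, hax n]
        · linarith [hy.1.le, hxb n]
      linarith
    have hb2 := hball hyI hdist
    rw [Real.dist_eq] at hb2
    rw [Real.norm_eq_abs]
    linarith
  have hinv0 : (0:ℝ) ≤ (b n - a n)⁻¹ := inv_nonneg.mpr (by linarith)
  rw [Real.dist_eq, hid, abs_mul, abs_of_nonneg hinv0]
  calc (b n - a n)⁻¹ * |∫ y in a n..b n, (φ y - φ x)|
      ≤ (b n - a n)⁻¹ * (ε/2 * |b n - a n|) := mul_le_mul_of_nonneg_left hbd hinv0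
    _ = ε/2 := by
        rw [abs_of_pos (by linarith : (0:ℝ) < b n - a n)]
        field_simp
    _ < ε := by linarith


lemma grr_side (hT : 1 ≤ T) (hφ : ContinuousOn φ (Set.Icc 0 T))
    (hf : IntegrableOn (fun p : ℝ × ℝ => Real.exp (|φ p.1 - φ p.2| / |p.1 - p.2| ^ ((1:ℝ)/4)))
      (Set.Icc 0 T ×ˢ Set.Icc 0 T))
    {x r : ℝ} (hx : x ∈ Set.Icc 0 T) (hr : 0 < r) (hr1 : r ≤ 1)
    {a b : ℕ → ℝ} (hax : ∀ n, a n ≤ x) (hxb : ∀ n, x ≤ b n) (h0 : ∀ n, 0 ≤ a n)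
    (hbT : ∀ n, b n ≤ T) (hlen : ∀ n, b n - a n = r / 2 ^ n)
    (hamono : ∀ n, a n ≤ a (n+1)) (hbmono : ∀ n, b (n+1) ≤ b n) :
    |φ x - (b 0 - a 0)⁻¹ * ∫ y in (a 0)..(b 0), φ y| ≤
      r ^ ((1:ℝ)/4) *
        ((Real.log (∫ p in Set.Icc 0 T ×ˢ Set.Icc 0 T,
            Real.exp (|φ p.1 - φ p.2| / |p.1 - p.2| ^ ((1:ℝ)/4)))
          + 2 * Real.log r⁻¹ + Real.log 2) * (1 - (1/2 : ℝ) ^ ((1:ℝ)/4))⁻¹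
         + 2 * Real.log 2 *
            ((1/2 : ℝ) ^ ((1:ℝ)/4) / (1 - (1/2 : ℝ) ^ ((1:ℝ)/4))^2)) := by
  set M₂ : ℝ := ∫ p in Set.Icc 0 T ×ˢ Set.Icc 0 T,
      Real.exp (|φ p.1 - φ p.2| / |p.1 - p.2| ^ ((1:ℝ)/4)) with hM₂
  set q : ℝ := (1/2 : ℝ) ^ ((1:ℝ)/4) with hq
  have hqpos : 0 < q := Real.rpow_pos_of_pos (by norm_num) _
  have hqlt : q < 1 := Real.rpow_lt_one (by norm_num) (by norm_num) (by norm_num)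
  set L2 : ℝ := Real.log 2 with hL2
  have hL20 : 0 ≤ L2 := Real.log_nonneg one_le_two
  set K : ℝ := Real.log M₂ + 2 * Real.log r⁻¹ + L2 with hK
  have hM₂1 : 1 ≤ M₂ := grr_M_ge_one hT hf
  have hK0 : 0 ≤ K := by
    have h1 : 0 ≤ Real.log M₂ := Real.log_nonneg hM₂1
    have h2 : 0 ≤ Real.log r⁻¹ := by
      rw [Real.log_inv]
      linarith [Real.log_nonpos hr.le hr1]
    rw [hK]; linarith
  set A : ℕ → ℝ := fun n => (b n - a n)⁻¹ * ∫ y in a n..b n, φ y with hA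
  have hr14 : (0:ℝ) ≤ r ^ ((1:ℝ)/4) := Real.rpow_nonneg hr.le _
  -- per-step bound
  have hstep : ∀ n : ℕ, |A n - A (n+1)| ≤
      r ^ ((1:ℝ)/4) * (q ^ n * (K + 2 * n * L2)) := by
    intro n
    have hablt : ∀ m : ℕ, a m < b m := by
      intro m
      have h := hlen m
      have : (0:ℝ) < r / 2 ^ m := by positivity
      linarith
    have hs := grr_step hφ hf (h0 n) (hamono n) (hablt (n+1)) (hbmono n) (hbT n)
    simp only [hA]
    refine le_trans hs (le_of_eq ?_)
    rw [hlen n, hlen (n+1)]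
    have hrpow : (r / 2 ^ n) ^ ((1:ℝ)/4) = r ^ ((1:ℝ)/4) * q ^ n := by
      have h1 : r / 2 ^ n = r * ((1:ℝ)/2) ^ n := by rw [div_pow, one_pow]; ring
      rw [h1, Real.mul_rpow hr.le (by positivity), hq,
        ← Real.rpow_natCast ((1/2:ℝ)) n, ← Real.rpow_mul (by norm_num),
        mul_comm (n:ℝ) ((1:ℝ)/4), Real.rpow_mul (by norm_num), Real.rpow_natCast]
    have hlog : Real.log (M₂ / (r / 2 ^ n * (r / 2 ^ (n+1)))) = K + 2 * n * L2 := by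
      rw [Real.log_div (by linarith) (by positivity),
        Real.log_mul (by positivity) (by positivity),
        Real.log_div (ne_of_gt hr) (by positivity),
        Real.log_div (ne_of_gt hr) (by positivity),
        Real.log_pow, Real.log_pow, hK, Real.log_inv, hL2]
      push_cast
      ring
    rw [hrpow, hlog]
    ring
  -- sum bounds
  have hqsum : ∀ N : ℕ, ∑ n ∈ Finset.range N, q ^ n ≤ (1 - q)⁻¹ := fun N =>
    sum_le_hasSum _ (fun i _ => pow_nonneg hqpos.le i) (hasSum_geometric_of_lt_one hqpos.le hqlt)
  have hnqsum : ∀ N : ℕ, ∑ n ∈ Finset.range N, (n : ℝ) * q ^ n ≤ q / (1 - q)^2 := fun N =>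
    sum_le_hasSum _ (fun i _ => mul_nonneg (Nat.cast_nonneg i) (pow_nonneg hqpos.le i))
      (hasSum_coe_mul_geometric_of_norm_lt_one
        (by rw [Real.norm_eq_abs, abs_of_pos hqpos]; exact hqlt))
  set S : ℝ := r ^ ((1:ℝ)/4) * (K * (1 - q)⁻¹ + 2 * L2 * (q / (1 - q)^2)) with hS
  have hsumbd : ∀ N : ℕ, ∑ n ∈ Finset.range N, |A n - A (n+1)| ≤ S := by
    intro N
    have h1 : ∑ n ∈ Finset.range N, |A n - A (n+1)|
        ≤ ∑ n ∈ Finset.range N, (r ^ ((1:ℝ)/4) * K * q ^ n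
            + r ^ ((1:ℝ)/4) * (2 * L2) * ((n:ℝ) * q ^ n)) := by
      refine Finset.sum_le_sum fun n _ => ?_
      refine le_trans (hstep n) (le_of_eq ?_)
      ring
    rw [Finset.sum_add_distrib, ← Finset.mul_sum, ← Finset.mul_sum] at h1
    refine le_trans h1 ?_
    have h2 : r ^ ((1:ℝ)/4) * K * (∑ n ∈ Finset.range N, q ^ n)
        ≤ r ^ ((1:ℝ)/4) * K * (1 - q)⁻¹ :=
      mul_le_mul_of_nonneg_left (hqsum N) (by positivity)
    have h3 : r ^ ((1:ℝ)/4) * (2 * L2) * (∑ n ∈ Finset.range N, (n:ℝ) * q ^ n)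
        ≤ r ^ ((1:ℝ)/4) * (2 * L2) * (q / (1 - q)^2) :=
      mul_le_mul_of_nonneg_left (hnqsum N) (by positivity)
    rw [hS]
    calc r ^ ((1:ℝ)/4) * K * (∑ n ∈ Finset.range N, q ^ n)
          + r ^ ((1:ℝ)/4) * (2 * L2) * (∑ n ∈ Finset.range N, (n:ℝ) * q ^ n)
        ≤ r ^ ((1:ℝ)/4) * K * (1 - q)⁻¹ + r ^ ((1:ℝ)/4) * (2 * L2) * (q / (1 - q)^2) := by
          exact add_le_add h2 h3
      _ = r ^ ((1:ℝ)/4) * (K * (1 - q)⁻¹ + 2 * L2 * (q / (1 - q)^2)) := by ring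
  -- telescoping
  have htel : ∀ N : ℕ, |A 0 - A N| ≤ ∑ n ∈ Finset.range N, |A n - A (n+1)| := by
    intro N
    induction N with
    | zero => simp
    | succ N ih =>
        rw [Finset.sum_range_succ]
        calc |A 0 - A (N+1)| ≤ |A 0 - A N| + |A N - A (N+1)| := by
              have := abs_sub_le (A 0) (A N) (A (N+1))
              linarith
          _ ≤ _ := by linarith
  have hbound : ∀ N : ℕ, |A 0 - A N| ≤ S := fun N => le_trans (htel N) (hsumbd N)
  -- limit
  have hAvg : Tendsto A atTop (𝓝 (φ x)) := grr_avg hφ hx hr hax hxb h0 hbT hlen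
  have hFl : Tendsto (fun N => |A 0 - A N|) atTop (𝓝 |A 0 - φ x|) :=
    ((tendsto_const_nhds.sub hAvg).abs)
  have hfinal : |A 0 - φ x| ≤ S := le_of_tendsto' hFl hbound
  rw [abs_sub_comm] at hfinal
  exact hfinal


lemma grr_key (hT : 1 ≤ T) (hφ : ContinuousOn φ (Set.Icc 0 T))
    (hf : IntegrableOn (fun p : ℝ × ℝ => Real.exp (|φ p.1 - φ p.2| / |p.1 - p.2| ^ ((1:ℝ)/4)))
      (Set.Icc 0 T ×ˢ Set.Icc 0 T))
    {δ s t : ℝ} (hδ : 0 < δ) (hδ2 : δ ≤ 1/2) (hs : s ∈ Set.Icc 0 T) (ht : t ∈ Set.Icc 0 T)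
    (hst : s ≤ t) (hd : t - s ≤ δ) :
    |φ t - φ s| ≤
      ((4 * (1 - (1/2:ℝ)^((1:ℝ)/4))⁻¹ * (1 + 4 / Real.log 2)
          + 2 * (1 - (1/2:ℝ)^((1:ℝ)/4))⁻¹
          + 4 * ((1/2:ℝ)^((1:ℝ)/4) / (1 - (1/2:ℝ)^((1:ℝ)/4))^2))
        + (2 * (1 - (1/2:ℝ)^((1:ℝ)/4))⁻¹ / Real.log 2) *
            Real.log (∫ p in Set.Icc 0 T ×ˢ Set.Icc 0 T,
              Real.exp (|φ p.1 - φ p.2| / |p.1 - p.2| ^ ((1:ℝ)/4))))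
        * δ ^ ((1:ℝ)/4) * Real.log (1/δ) := by
  set M₂ : ℝ := ∫ p in Set.Icc 0 T ×ˢ Set.Icc 0 T,
      Real.exp (|φ p.1 - φ p.2| / |p.1 - p.2| ^ ((1:ℝ)/4)) with hM₂
  set q : ℝ := (1/2 : ℝ) ^ ((1:ℝ)/4) with hq
  have hqpos : 0 < q := Real.rpow_pos_of_pos (by norm_num) _
  have hqlt : q < 1 := Real.rpow_lt_one (by norm_num) (by norm_num) (by norm_num)
  have h1q : (0:ℝ) < 1 - q := by linarith
  set k₁ : ℝ := (1 - q)⁻¹ with hk₁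
  set k₂ : ℝ := q / (1 - q)^2 with hk₂
  have hk₁pos : 0 < k₁ := inv_pos.mpr h1q
  have hk₂pos : 0 < k₂ := div_pos hqpos (by positivity)
  set L2 : ℝ := Real.log 2 with hL2
  have hL2pos : 0 < L2 := Real.log_pos one_lt_two
  set LD : ℝ := Real.log (1/δ) with hLD
  have hLD2 : L2 ≤ LD := by
    rw [hL2, hLD]
    refine Real.log_le_log (by norm_num) ?_
    rw [le_div_iff₀ hδ]
    linarith
  have hLDpos : 0 < LD := lt_of_lt_of_le hL2pos hLD2
  set δ14 : ℝ := δ ^ ((1:ℝ)/4) with hδ14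
  have hδ14pos : 0 < δ14 := Real.rpow_pos_of_pos hδ _
  have hM₂1 : 1 ≤ M₂ := grr_M_ge_one hT hf
  have hm0 : 0 ≤ Real.log M₂ := Real.log_nonneg hM₂1
  rcases eq_or_lt_of_le hst with heq | hlt
  · -- s = t
    rw [← heq, sub_self, abs_zero]
    have hC : 0 ≤ (4 * k₁ * (1 + 4 / L2) + 2 * k₁ + 4 * k₂) + (2 * k₁ / L2) * Real.log M₂ := by
      positivity
    positivity
  · -- s < t
    set r : ℝ := t - s with hrdef
    have hr : 0 < r := sub_pos.mpr hlt
    have hrδ : r ≤ δ := hd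
    have hr1 : r ≤ 1 := by linarith
    have hs0 : 0 ≤ s := hs.1
    have htT : t ≤ T := ht.2
    -- t-side
    have hts := grr_side hT hφ hf ht hr hr1
      (a := fun n => t - r / 2 ^ n) (b := fun _ => t)
      (fun n => by
        have : (0:ℝ) < r / 2 ^ n := by positivity
        linarith)
      (fun n => le_refl t)
      (fun n => by
        have h1 : r / 2 ^ n ≤ r := div_le_self hr.le (one_le_pow₀ one_le_two)
        have : t - r = s := by rw [hrdef]; ring
        linarith)
      (fun n => htT)
      (fun n => by ring)
      (fun n => by
        have : r / 2 ^ (n+1) ≤ r / 2 ^ n :=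
          div_le_div_of_nonneg_left hr.le (by positivity)
            (pow_le_pow_right₀ one_le_two (Nat.le_succ n))
        linarith)
      (fun n => le_refl t)
    -- s-side
    have hss := grr_side hT hφ hf hs hr hr1
      (a := fun _ => s) (b := fun n => s + r / 2 ^ n)
      (fun n => le_refl s)
      (fun n => by
        have : (0:ℝ) < r / 2 ^ n := by positivity
        linarith)
      (fun n => hs0)
      (fun n => by
        have h1 : r / 2 ^ n ≤ r := div_le_self hr.le (one_le_pow₀ one_le_two)
        have : s + r = t := by rw [hrdef]; ring
        linarith)
      (fun n => by ring)
      (fun n => le_refl s)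
      (fun n => by
        have : r / 2 ^ (n+1) ≤ r / 2 ^ n :=
          div_le_div_of_nonneg_left hr.le (by positivity)
            (pow_le_pow_right₀ one_le_two (Nat.le_succ n))
        linarith)
    simp only [pow_zero, div_one] at hts hss
    have e1 : t - r = s := by rw [hrdef]; ring
    have e2 : s + r = t := by rw [hrdef]; ring
    rw [e1] at hts
    rw [e2] at hss
    set E : ℝ := (Real.log M₂ + 2 * Real.log r⁻¹ + L2) * k₁ + 2 * L2 * k₂ with hE
    set V : ℝ := (t - s)⁻¹ * ∫ y in s..t, φ y with hV
    have htri : |φ t - φ s| ≤ 2 * (r ^ ((1:ℝ)/4) * E) := by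
      have h1 : |φ t - φ s| ≤ |φ t - V| + |V - φ s| := abs_sub_le (φ t) V (φ s)
      have h2 : |V - φ s| = |φ s - V| := abs_sub_comm V (φ s)
      calc |φ t - φ s| ≤ |φ t - V| + |φ s - V| := by rw [← h2]; exact h1
        _ ≤ r ^ ((1:ℝ)/4) * E + r ^ ((1:ℝ)/4) * E := add_le_add hts hss
        _ = 2 * (r ^ ((1:ℝ)/4) * E) := by ring
    -- now the arithmetic
    set r14 : ℝ := r ^ ((1:ℝ)/4) with hr14
    have hr14pos : 0 < r14 := Real.rpow_pos_of_pos hr _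
    set m : ℝ := Real.log M₂ with hm
    set lr : ℝ := Real.log r⁻¹ with hlr
    have f1 : r14 ≤ δ14 := Real.rpow_le_rpow hr.le hrδ (by norm_num)
    have hone : (1:ℝ) ≤ LD / L2 := (one_le_div hL2pos).mpr hLD2
    have f1' : r14 ≤ δ14 * LD / L2 := by
      calc r14 ≤ δ14 := f1
        _ = δ14 * 1 := by ring
        _ ≤ δ14 * (LD / L2) := mul_le_mul_of_nonneg_left hone hδ14pos.le
        _ = δ14 * LD / L2 := by ring
    have f4 : r14 * lr ≤ δ14 * LD + 4 * δ14 := by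
      have hsplit : lr = LD + Real.log (δ / r) := by
        rw [hlr, hLD]
        rw [show r⁻¹ = (1/δ) * (δ/r) by field_simp]
        rw [Real.log_mul (by positivity) (by positivity)]
      have hdr1 : (1:ℝ) ≤ δ / r := (one_le_div hr).mpr hrδ
      have hlogdr : Real.log (δ/r) ≤ 4 * (δ/r) ^ ((1:ℝ)/4) := by
        have h1 : Real.log (δ/r) = 4 * Real.log ((δ/r) ^ ((1:ℝ)/4)) := by
          rw [Real.log_rpow (by positivity)]; ring
        have h2 : Real.log ((δ/r) ^ ((1:ℝ)/4)) ≤ (δ/r) ^ ((1:ℝ)/4) := by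
          have := Real.log_le_sub_one_of_pos (show (0:ℝ) < (δ/r) ^ ((1:ℝ)/4) by positivity)
          linarith
        linarith
      have hmulid : r14 * (δ/r) ^ ((1:ℝ)/4) = δ14 := by
        rw [hr14, hδ14, ← Real.mul_rpow hr.le (by positivity)]
        congr 1
        field_simp
      have h3 : r14 * Real.log (δ/r) ≤ 4 * δ14 := by
        calc r14 * Real.log (δ/r) ≤ r14 * (4 * (δ/r) ^ ((1:ℝ)/4)) :=
              mul_le_mul_of_nonneg_left hlogdr hr14pos.le
          _ = 4 * (r14 * (δ/r) ^ ((1:ℝ)/4)) := by ring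
          _ = 4 * δ14 := by rw [hmulid]
      have h4 : r14 * LD ≤ δ14 * LD := mul_le_mul_of_nonneg_right f1 hLDpos.le
      calc r14 * lr = r14 * LD + r14 * Real.log (δ/r) := by rw [hsplit]; ring
        _ ≤ δ14 * LD + 4 * δ14 := add_le_add h4 h3
    have g2 : r14 * lr ≤ (1 + 4/L2) * (δ14 * LD) := by
      have h5 : δ14 ≤ δ14 * LD / L2 := by
        calc δ14 = δ14 * 1 := by ring
          _ ≤ δ14 * (LD / L2) := mul_le_mul_of_nonneg_left hone hδ14pos.le
          _ = δ14 * LD / L2 := by ring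
      have : 4 * δ14 ≤ (4/L2) * (δ14 * LD) := by
        calc 4 * δ14 ≤ 4 * (δ14 * LD / L2) := by linarith
          _ = (4/L2) * (δ14 * LD) := by ring
      linarith
    have H1 : 2 * k₁ * (r14 * m) ≤ 2 * k₁ * ((δ14 * LD / L2) * m) := by
      refine mul_le_mul_of_nonneg_left ?_ (by positivity)
      exact mul_le_mul_of_nonneg_right f1' hm0
    have H2 : 4 * k₁ * (r14 * lr) ≤ 4 * k₁ * ((1 + 4/L2) * (δ14 * LD)) :=
      mul_le_mul_of_nonneg_left g2 (by positivity)
    have H3 : (2 * L2 * k₁ + 4 * L2 * k₂) * r14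
        ≤ (2 * L2 * k₁ + 4 * L2 * k₂) * (δ14 * LD / L2) :=
      mul_le_mul_of_nonneg_left f1' (by positivity)
    calc |φ t - φ s| ≤ 2 * (r14 * E) := htri
      _ = 2 * k₁ * (r14 * m) + 4 * k₁ * (r14 * lr) + (2 * L2 * k₁ + 4 * L2 * k₂) * r14 := by
          rw [hE]; ring
      _ ≤ 2 * k₁ * ((δ14 * LD / L2) * m) + 4 * k₁ * ((1 + 4/L2) * (δ14 * LD))
          + (2 * L2 * k₁ + 4 * L2 * k₂) * (δ14 * LD / L2) := by
          linarith
      _ = ((4 * k₁ * (1 + 4 / L2) + 2 * k₁ + 4 * k₂) + (2 * k₁ / L2) * m) * δ14 * LD := by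
          field_simp
          ring
      _ = _ := by rw [hk₁, hk₂, hL2, hδ14, hLD, hm, hq]

end GRR

theorem stmt_3 :
    ∃ C₁ C₂ : ℝ, 0 < C₁ ∧ 0 < C₂ ∧
      ∀ (T : ℝ) (φ : ℝ → ℝ) (M : ℝ), 1 ≤ T → ContinuousOn φ (Set.Icc 0 T) →
        M = ∫ t in (0:ℝ)..T, ∫ s in (0:ℝ)..T,
              Real.exp (|φ t - φ s| / |t - s| ^ ((1:ℝ)/4)) →
        IntegrableOn
          (fun p : ℝ × ℝ => Real.exp (|φ p.1 - φ p.2| / |p.1 - p.2| ^ ((1:ℝ)/4)))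
          (Set.Icc 0 T ×ˢ Set.Icc 0 T) →
        ∀ δ s t : ℝ, 0 < δ → δ ≤ 1/2 → s ∈ Set.Icc (0:ℝ) T → t ∈ Set.Icc (0:ℝ) T →
          |s - t| ≤ δ →
          |φ t - φ s| ≤ (C₁ + C₂ * Real.log M) * δ ^ ((1:ℝ)/4) * Real.log (1/δ) := by
  have hqpos : (0:ℝ) < (1/2 : ℝ) ^ ((1:ℝ)/4) := Real.rpow_pos_of_pos (by norm_num) _
  have hqlt : (1/2 : ℝ) ^ ((1:ℝ)/4) < 1 :=
    Real.rpow_lt_one (by norm_num) (by norm_num) (by norm_num)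
  have h1q : (0:ℝ) < 1 - (1/2 : ℝ) ^ ((1:ℝ)/4) := by linarith
  have hL2pos : (0:ℝ) < Real.log 2 := Real.log_pos one_lt_two
  refine ⟨(4 * (1 - (1/2:ℝ)^((1:ℝ)/4))⁻¹ * (1 + 4 / Real.log 2)
          + 2 * (1 - (1/2:ℝ)^((1:ℝ)/4))⁻¹
          + 4 * ((1/2:ℝ)^((1:ℝ)/4) / (1 - (1/2:ℝ)^((1:ℝ)/4))^2)),
    (2 * (1 - (1/2:ℝ)^((1:ℝ)/4))⁻¹ / Real.log 2), ?_, ?_, ?_⟩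
  · positivity
  · positivity
  intro T φ M hT hφ hM hf δ s t hδ hδ2 hs ht hd
  have h0T : (0:ℝ) ≤ T := le_trans zero_le_one hT
  -- identify M with the product set integral
  have hMeq : M = ∫ p in Set.Icc 0 T ×ˢ Set.Icc 0 T,
      Real.exp (|φ p.1 - φ p.2| / |p.1 - p.2| ^ ((1:ℝ)/4)) := by
    rw [hM]
    have hinner : ∀ x : ℝ, (∫ y in (0:ℝ)..T, Real.exp (|φ x - φ y| / |x - y| ^ ((1:ℝ)/4)))
        = ∫ y in Set.Icc (0:ℝ) T, Real.exp (|φ x - φ y| / |x - y| ^ ((1:ℝ)/4)) := by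
      intro x
      rw [intervalIntegral.integral_of_le h0T, ← integral_Icc_eq_integral_Ioc]
    rw [intervalIntegral.integral_of_le h0T, ← integral_Icc_eq_integral_Ioc]
    simp only [hinner]
    have hps := setIntegral_prod (μ := (volume : Measure ℝ)) (ν := (volume : Measure ℝ))
      (fun p : ℝ × ℝ => Real.exp (|φ p.1 - φ p.2| / |p.1 - p.2| ^ ((1:ℝ)/4)))
      (s := Set.Icc 0 T) (t := Set.Icc 0 T) hf
    rw [show ((volume : Measure ℝ).prod (volume : Measure ℝ))
        = (volume : Measure (ℝ × ℝ)) from rfl] at hps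
    rw [← hps]
  rw [hMeq]
  rcases le_total s t with h | h
  · refine grr_key hT hφ hf hδ hδ2 hs ht h ?_
    have : |s - t| = t - s := by
      rw [abs_sub_comm, abs_of_nonneg (by linarith)]
    linarith [le_abs_self (s - t)]
  · rw [abs_sub_comm]
    refine grr_key hT hφ hf hδ hδ2 ht hs h ?_
    calc s - t ≤ |s - t| := le_abs_self _
      _ ≤ δ := hd
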